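/- Let A be a nonzero bounded linear operator on a complex Hilbert space with A² = 0. Then w(A) = (1/2)√(‖A*A + AA*‖). -/

import Mathlib

open scoped InnerProductSpace
open ContinuousLinearMap

/-- The numerical radius of a bounded linear operator. -/
noncomputable def numRadius {H : Type*} [NormedAddCommGroup H] [InnerProductSpace ℂ H]
    (A : H →L[ℂ] H) : ℝ :=
  sSup {r : ℝ | ∃ x : H, ‖x‖ = 1 ∧ r = ‖⟪A x, x⟫_ℂ‖}

/-- The Crawford number of a bounded linear operator. -/
noncomputable def crawford {H : Type*} [NormedAddCommGroup H] [InnerProductSpace ℂ H]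
    (A : H →L[ℂ] H) : ℝ :=
  sInf {r : ℝ | ∃ x : H, ‖x‖ = 1 ∧ r = ‖⟪A x, x⟫_ℂ‖}

/-- The real part of a bounded linear operator. -/
noncomputable def reP {H : Type*} [NormedAddCommGroup H] [InnerProductSpace ℂ H]
    [CompleteSpace H] (A : H →L[ℂ] H) : H →L[ℂ] H :=
  ((2 : ℂ)⁻¹) • (A + adjoint A)

/-- The imaginary part of a bounded linear operator. -/
noncomputable def imP {H : Type*} [NormedAddCommGroup H] [InnerProductSpace ℂ H]
    [CompleteSpace H] (A : H →L[ℂ] H) : H →L[ℂ] H :=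
  ((2 * Complex.I)⁻¹) • (A - adjoint A)

-- aux: in a C*-ring, if P,Q selfadjoint with PQ=QP=0 then ‖P+Q‖ ≤ max ‖P‖ ‖Q‖
lemma aux_sum_pow {E : Type*} [Ring E] {P Q : E} (hPQ : P * Q = 0) (hQP : Q * P = 0) :
    ∀ n : ℕ, 1 ≤ n → (P + Q) ^ n = P ^ n + Q ^ n := by
  intro n hn
  induction n with
  | zero => omega
  | succ m ih =>
    rcases Nat.eq_or_lt_of_le hn with h1 | h1
    · simp [← h1]
    · have hm : 1 ≤ m := by omega
      have hPm : P ^ m * Q = 0 := by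
        obtain ⟨k, rfl⟩ := Nat.exists_eq_add_of_le hm
        rw [add_comm, pow_add, pow_one, mul_assoc, hPQ, mul_zero]
      have hQm : Q ^ m * P = 0 := by
        obtain ⟨k, rfl⟩ := Nat.exists_eq_add_of_le hm
        rw [add_comm, pow_add, pow_one, mul_assoc, hQP, mul_zero]
      rw [pow_succ, ih hm, add_mul, mul_add, mul_add, hPm, hQm]
      simp [← pow_succ]

lemma aux_norm_add_le {E : Type*} [NormedRing E] [StarRing E] [CStarRing E] {P Q : E}
    (hP : IsSelfAdjoint P) (hQ : IsSelfAdjoint Q) (hPQ : P * Q = 0) (hQP : Q * P = 0) :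
    ‖P + Q‖ ≤ max ‖P‖ ‖Q‖ := by
  set M : ℝ := max ‖P‖ ‖Q‖ with hM
  have hM0 : 0 ≤ M := le_trans (norm_nonneg P) (le_max_left _ _)
  have key : ∀ n : ℕ, ‖P + Q‖ ^ 2 ^ n ≤ 2 * M ^ 2 ^ n := by
    intro n
    have h1 : ‖(P + Q) ^ 2 ^ n‖ = ‖P + Q‖ ^ 2 ^ n := by
      rw [← coe_nnnorm, ← coe_nnnorm, (hP.add hQ).nnnorm_pow_two_pow n, NNReal.coe_pow]
    have h2 : ‖P ^ 2 ^ n‖ = ‖P‖ ^ 2 ^ n := by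
      rw [← coe_nnnorm, ← coe_nnnorm, hP.nnnorm_pow_two_pow n, NNReal.coe_pow]
    have h3 : ‖Q ^ 2 ^ n‖ = ‖Q‖ ^ 2 ^ n := by
      rw [← coe_nnnorm, ← coe_nnnorm, hQ.nnnorm_pow_two_pow n, NNReal.coe_pow]
    have hsum := aux_sum_pow hPQ hQP (2 ^ n) Nat.one_le_two_pow
    calc ‖P + Q‖ ^ 2 ^ n = ‖(P + Q) ^ 2 ^ n‖ := h1.symm
      _ = ‖P ^ 2 ^ n + Q ^ 2 ^ n‖ := by rw [hsum]
      _ ≤ ‖P ^ 2 ^ n‖ + ‖Q ^ 2 ^ n‖ := norm_add_le _ _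
      _ = ‖P‖ ^ 2 ^ n + ‖Q‖ ^ 2 ^ n := by rw [h2, h3]
      _ ≤ M ^ 2 ^ n + M ^ 2 ^ n := by
          gcongr <;> first
            | exact norm_nonneg _
            | exact le_max_left _ _
            | exact le_max_right _ _
      _ = 2 * M ^ 2 ^ n := by ring
  by_contra hlt
  push_neg at hlt
  have hMpos : 0 < M := by
    rcases lt_or_eq_of_le hM0 with h | h
    · exact h
    · exfalso
      have hP0 : P = 0 := by
        have : ‖P‖ ≤ 0 := h ▸ le_max_left ‖P‖ ‖Q‖
        simpa using le_antisymm this (norm_nonneg _)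
      have hQ0 : Q = 0 := by
        have : ‖Q‖ ≤ 0 := h ▸ le_max_right ‖P‖ ‖Q‖
        simpa using le_antisymm this (norm_nonneg _)
      rw [hP0, hQ0, add_zero, norm_zero, ← h] at hlt
      exact lt_irrefl _ hlt
  set r : ℝ := ‖P + Q‖ / M with hr
  have hr1 : 1 < r := (one_lt_div hMpos).2 hlt
  obtain ⟨n, hn⟩ := pow_unbounded_of_one_lt (2 : ℝ) hr1
  have h2n : r ^ n ≤ r ^ 2 ^ n :=
    pow_le_pow_right₀ hr1.le (Nat.le_of_lt (Nat.lt_two_pow_self))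
  have : r ^ 2 ^ n ≤ 2 := by
    rw [hr, div_pow, div_le_iff₀ (pow_pos hMpos _)]
    exact key n
  linarith [hn.trans_le h2n]

lemma aux_normT {H : Type*} [NormedAddCommGroup H] [InnerProductSpace ℂ H]
    [CompleteSpace H] (A : H →L[ℂ] H) (h2 : A ^ 2 = 0) :
    ‖adjoint A * A + A * adjoint A‖ = ‖A‖ ^ 2 := by
  set P := adjoint A * A with hPdef
  set Q := A * adjoint A with hQdef
  have hstar : (star A : H →L[ℂ] H) = adjoint A := star_eq_adjoint A
  have hPsa : IsSelfAdjoint P := by rw [hPdef, ← hstar]; exact IsSelfAdjoint.star_mul_self A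
  have hQsa : IsSelfAdjoint Q := by
    rw [hQdef, ← hstar]
    simpa using IsSelfAdjoint.star_mul_self (star A)
  have hA2 : A * A = 0 := by rw [← pow_two]; exact h2
  have hA2s : adjoint A * adjoint A = 0 := by
    rw [← hstar, ← star_mul, hA2, star_zero]
  have hPQ : P * Q = 0 := by
    rw [hPdef, hQdef, mul_assoc, ← mul_assoc A A, hA2, zero_mul, mul_zero]
  have hQP : Q * P = 0 := by
    rw [hQdef, hPdef, mul_assoc, ← mul_assoc (adjoint A) (adjoint A), hA2s, zero_mul, mul_zero]
  have hPn : ‖P‖ = ‖A‖ ^ 2 := by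
    rw [hPdef, ← hstar, CStarRing.norm_star_mul_self, sq]
  have hQn : ‖Q‖ = ‖A‖ ^ 2 := by
    rw [hQdef, ← hstar, CStarRing.norm_self_mul_star, sq]
  apply le_antisymm
  · have := aux_norm_add_le hPsa hQsa hPQ hQP
    rwa [hPn, hQn, max_self] at this
  · -- lower bound: ‖A x‖ ≤ √‖P+Q‖ ‖x‖
    have hTnn : (0:ℝ) ≤ ‖P + Q‖ := norm_nonneg _
    have hle : ‖A‖ ≤ Real.sqrt ‖P + Q‖ := by
      apply ContinuousLinearMap.opNorm_le_bound _ (Real.sqrt_nonneg _)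
      intro x
      have h1 : ‖A x‖ ^ 2 ≤ ‖P + Q‖ * ‖x‖ ^ 2 := by
        have e1 : RCLike.re ⟪P x, x⟫_ℂ = ‖A x‖ ^ 2 := by
          rw [hPdef, ContinuousLinearMap.mul_apply, adjoint_inner_left]
          exact inner_self_eq_norm_sq (A x)
        have e2 : RCLike.re ⟪Q x, x⟫_ℂ = ‖adjoint A x‖ ^ 2 := by
          rw [hQdef, ContinuousLinearMap.mul_apply]
          rw [(adjoint_inner_right A _ _).symm]
          exact inner_self_eq_norm_sq (adjoint A x)
        have e3 : RCLike.re ⟪(P + Q) x, x⟫_ℂ = ‖A x‖ ^ 2 + ‖adjoint A x‖ ^ 2 := by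
          rw [ContinuousLinearMap.add_apply, inner_add_left, map_add RCLike.re, e1, e2]
        have e4 : RCLike.re ⟪(P + Q) x, x⟫_ℂ ≤ ‖P + Q‖ * ‖x‖ ^ 2 := by
          calc RCLike.re ⟪(P + Q) x, x⟫_ℂ ≤ ‖(P + Q) x‖ * ‖x‖ := re_inner_le_norm _ _
            _ ≤ (‖P + Q‖ * ‖x‖) * ‖x‖ := by
                gcongr; exact (P + Q).le_opNorm x
            _ = ‖P + Q‖ * ‖x‖ ^ 2 := by ring
        nlinarith [sq_nonneg (‖adjoint A x‖)]
      calc ‖A x‖ = Real.sqrt (‖A x‖ ^ 2) := (Real.sqrt_sq (norm_nonneg _)).symm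
        _ ≤ Real.sqrt (‖P + Q‖ * ‖x‖ ^ 2) := Real.sqrt_le_sqrt h1
        _ = Real.sqrt ‖P + Q‖ * ‖x‖ := by
            rw [Real.sqrt_mul hTnn, Real.sqrt_sq (norm_nonneg _)]
    calc ‖A‖ ^ 2 ≤ Real.sqrt ‖P + Q‖ ^ 2 := pow_le_pow_left₀ (norm_nonneg _) hle 2
      _ = ‖P + Q‖ := Real.sq_sqrt hTnn

section numrad

variable {H : Type*} [NormedAddCommGroup H] [InnerProductSpace ℂ H] [CompleteSpace H]

-- the upper bound: each numerical-range value is at most ‖A‖ / 2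
lemma aux_upper (A : H →L[ℂ] H) (h2 : A ^ 2 = 0) {x : H} (hx : ‖x‖ = 1) :
    ‖⟪A x, x⟫_ℂ‖ ≤ ‖A‖ / 2 := by
  set K : Submodule ℂ H := LinearMap.ker (A : H →ₗ[ℂ] H) with hK
  haveI : CompleteSpace K := (ContinuousLinearMap.isClosed_ker A).completeSpace_coe
  obtain ⟨u, hu, v, hv, hxuv⟩ := K.exists_add_mem_mem_orthogonal x
  have hAu : A u = 0 := hu
  have hAx : A x = A v := by rw [hxuv, map_add, hAu, zero_add]
  have hAxK : A x ∈ K := by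
    have : A (A x) = 0 := by
      have := congrArg (fun T : H →L[ℂ] H => T x) h2
      simpa [pow_two, ContinuousLinearMap.mul_apply] using this
    exact this
  have huv : ⟪u, v⟫_ℂ = 0 := (Submodule.mem_orthogonal K v).1 hv u hu
  have hAxv : ⟪A x, v⟫_ℂ = 0 := (Submodule.mem_orthogonal K v).1 hv (A x) hAxK
  have hsplit : ⟪A x, x⟫_ℂ = ⟪A x, u⟫_ℂ := by
    rw [show ⟪A x, x⟫_ℂ = ⟪A x, u + v⟫_ℂ from by rw [← hxuv], inner_add_right, hAxv, add_zero]
  have hnorm1 : ‖u‖ ^ 2 + ‖v‖ ^ 2 = 1 := by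
    have := norm_add_sq (𝕜 := ℂ) u v
    rw [huv] at this
    simp only [map_zero, mul_zero, add_zero] at this
    rw [← hxuv, hx] at this
    linarith [this]
  have hAv : ‖A v‖ ≤ ‖A‖ * ‖v‖ := A.le_opNorm v
  calc ‖⟪A x, x⟫_ℂ‖ = ‖⟪A x, u⟫_ℂ‖ := by rw [hsplit]
    _ ≤ ‖A x‖ * ‖u‖ := norm_inner_le_norm _ _
    _ = ‖A v‖ * ‖u‖ := by rw [hAx]
    _ ≤ (‖A‖ * ‖v‖) * ‖u‖ := by gcongr
    _ ≤ ‖A‖ / 2 := by nlinarith [norm_nonneg A, sq_nonneg (‖u‖ - ‖v‖), norm_nonneg u, norm_nonneg v]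

-- the lower construction
lemma aux_lower (A : H →L[ℂ] H) (hA : A ≠ 0) (h2 : A ^ 2 = 0) {c : ℝ} (hc : c < ‖A‖) :
    ∃ x : H, ‖x‖ = 1 ∧ c / 2 < ‖⟪A x, x⟫_ℂ‖ := by
  set K : Submodule ℂ H := LinearMap.ker (A : H →ₗ[ℂ] H) with hK
  haveI : CompleteSpace K := (ContinuousLinearMap.isClosed_ker A).completeSpace_coe
  set c' : ℝ := max c 0 with hc'
  have hc'lt : c' < ‖A‖ := max_lt hc (norm_pos_iff.mpr hA)
  obtain ⟨x, hx1, hx2⟩ := A.exists_lt_apply_of_lt_opNorm hc'lt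
  obtain ⟨p, hp, q, hq, hxpq⟩ := K.exists_add_mem_mem_orthogonal x
  have hAp : A p = 0 := hp
  have hAx : A x = A q := by rw [hxpq, map_add, hAp, zero_add]
  have hpq : ⟪p, q⟫_ℂ = 0 := (Submodule.mem_orthogonal K q).1 hq p hp
  have hqx : ‖q‖ ≤ ‖x‖ := by
    have := norm_add_sq (𝕜 := ℂ) p q
    rw [hpq] at this
    simp only [map_zero, mul_zero, add_zero] at this
    rw [← hxpq] at this
    nlinarith [norm_nonneg p, norm_nonneg q, norm_nonneg x]
  have hAq_pos : c' < ‖A q‖ := by rwa [hAx] at hx2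
  have hq0 : q ≠ 0 := by
    intro h
    rw [h, map_zero, norm_zero] at hAq_pos
    exact absurd hAq_pos (not_lt.2 (le_max_right c 0))
  have hqn : 0 < ‖q‖ := norm_pos_iff.mpr hq0
  set v : H := ((‖q‖⁻¹ : ℝ) : ℂ) • q with hvdef
  have hvK : v ∈ Kᗮ := Submodule.smul_mem _ _ hq
  have hvn : ‖v‖ = 1 := by
    rw [hvdef, norm_smul]
    simp [abs_of_pos (inv_pos.2 hqn), inv_mul_cancel₀ hqn.ne']
  have hAv_big : c' < ‖A v‖ := by
    have hq1 : ‖q‖ ≤ 1 := le_trans hqx (le_of_lt hx1)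
    have : ‖A v‖ = ‖q‖⁻¹ * ‖A q‖ := by
      rw [hvdef, map_smul, norm_smul]
      simp [abs_of_pos (inv_pos.2 hqn)]
    rw [this]
    have h1le : 1 ≤ ‖q‖⁻¹ := (one_le_inv₀ hqn).2 hq1
    calc c' < ‖A q‖ := hAq_pos
      _ = 1 * ‖A q‖ := (one_mul _).symm
      _ ≤ ‖q‖⁻¹ * ‖A q‖ := by gcongr
  have hAv0 : A v ≠ 0 := by
    intro h
    rw [h, norm_zero] at hAv_big
    exact absurd hAv_big (not_lt.2 (le_max_right c 0))
  have hAvn : 0 < ‖A v‖ := norm_pos_iff.mpr hAv0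
  set u : H := ((‖A v‖⁻¹ : ℝ) : ℂ) • (A v) with hudef
  have hun : ‖u‖ = 1 := by
    rw [hudef, norm_smul]
    simp [abs_of_pos (inv_pos.2 hAvn), inv_mul_cancel₀ hAvn.ne']
  have hAvK : A v ∈ K := by
    have : A (A v) = 0 := by
      have := congrArg (fun T : H →L[ℂ] H => T v) h2
      simpa [pow_two, ContinuousLinearMap.mul_apply] using this
    exact this
  have hAu : A u = 0 := by
    rw [hudef, map_smul, show A (A v) = 0 from hAvK, smul_zero]
  have hAvv : ⟪A v, v⟫_ℂ = 0 := (Submodule.mem_orthogonal K v).1 hvK (A v) hAvK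
  have huv : ⟪u, v⟫_ℂ = 0 := by
    rw [hudef, inner_smul_left, hAvv, mul_zero]
  have hAvu : ⟪A v, u⟫_ℂ = (‖A v‖ : ℂ) := by
    rw [hudef, inner_smul_right, inner_self_eq_norm_sq_to_K]
    push_cast
    rw [sq]
    field_simp
    exact (div_eq_iff (RCLike.ofReal_ne_zero.2 (norm_ne_zero_iff.2 hAv0))).2 (sq _)
  set s : ℝ := (Real.sqrt 2)⁻¹ with hsdef
  have hs2 : Real.sqrt 2 > 0 := Real.sqrt_pos.2 (by norm_num)
  set y : H := ((s : ℝ) : ℂ) • (u + v) with hydef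
  have huvn : ‖u + v‖ = Real.sqrt 2 := by
    have := norm_add_sq (𝕜 := ℂ) u v
    rw [huv] at this
    simp only [map_zero, mul_zero, add_zero, hun, hvn] at this
    have h2' : ‖u + v‖ ^ 2 = 2 := by rw [this]; norm_num
    rw [← h2']
    exact (Real.sqrt_sq (norm_nonneg _)).symm
  have hyn : ‖y‖ = 1 := by
    rw [hydef, norm_smul, huvn, Complex.norm_real, Real.norm_eq_abs, hsdef,
      abs_of_pos (inv_pos.2 hs2), inv_mul_cancel₀ hs2.ne']
  refine ⟨y, hyn, ?_⟩
  have hinner : ⟪A y, y⟫_ℂ = ((s * s : ℝ) : ℂ) * (‖A v‖ : ℂ) := by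
    rw [hydef, map_smul, inner_smul_left, inner_smul_right]
    rw [map_add, inner_add_left, inner_add_right, inner_add_right, hAu]
    simp only [inner_zero_left, zero_add, hAvv, add_zero, hAvu]
    rw [Complex.conj_ofReal]
    push_cast
    ring
  have hss : s * s = 1 / 2 := by
    rw [hsdef, ← mul_inv]
    rw [Real.mul_self_sqrt (by norm_num : (0:ℝ) ≤ 2)]
    norm_num
  rw [hinner, hss, norm_mul]
  simp only [Complex.norm_real]
  rw [Real.norm_eq_abs, Real.norm_eq_abs, abs_of_pos (by norm_num : (0:ℝ) < 1/2),
    abs_of_pos hAvn]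
  have hcc : c ≤ c' := le_max_left c 0
  linarith

end numrad

theorem stmt17 {H : Type*} [NormedAddCommGroup H] [InnerProductSpace ℂ H]
    [CompleteSpace H] [Nontrivial H] (A : H →L[ℂ] H) (hA : A ≠ 0) (h2 : A ^ 2 = 0) :
    numRadius A = (1/2 : ℝ) * Real.sqrt ‖adjoint A * A + A * adjoint A‖ := by
  rw [aux_normT A h2]
  unfold numRadius
  set S : Set ℝ := {r : ℝ | ∃ x : H, ‖x‖ = 1 ∧ r = ‖⟪A x, x⟫_ℂ‖} with hS
  have hbdd : BddAbove S := by
    refine ⟨‖A‖ / 2, fun r hr => ?_⟩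
    obtain ⟨x, hx, rfl⟩ := hr
    exact aux_upper A h2 hx
  have hne : S.Nonempty := by
    obtain ⟨x, hx, -⟩ := aux_lower A hA h2 (c := 0) (norm_pos_iff.mpr hA)
    exact ⟨_, x, hx, rfl⟩
  have hle : sSup S ≤ ‖A‖ / 2 := by
    refine csSup_le hne fun r hr => ?_
    obtain ⟨x, hx, rfl⟩ := hr
    exact aux_upper A h2 hx
  have hge : ‖A‖ / 2 ≤ sSup S := by
    refine le_of_forall_lt fun c hc => ?_
    obtain ⟨x, hx, hgt⟩ := aux_lower A hA h2 (c := 2 * c) (by linarith)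
    have hmem : ‖⟪A x, x⟫_ℂ‖ ∈ S := ⟨x, hx, rfl⟩
    have : c < ‖⟪A x, x⟫_ℂ‖ := by linarith
    exact lt_of_lt_of_le this (le_csSup hbdd hmem)
  rw [le_antisymm hle hge, Real.sqrt_sq (norm_nonneg A)]
  ring
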